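/- Let p be an odd prime, and let t satisfy 0 ≤ t < α and 1 ≤ t ≤ k. Then U^k(ℤ_{p^α}) ≅ U^k(ℤ_p) × U^{k-1}(ℤ_p) × ⋯ × U^{k-t+1}(ℤ_p) × U^{k-t}(ℤ_{p^{α-t}}). -/

import Mathlib

/-- Cyclic factors of the group of units of `ZMod (p^a)` (Lemma int1). -/
noncomputable def pUnitsList (p a : ℕ) : List ℕ :=
  if p = 2 then (if 2 ≤ a then [2, 2 ^ (a - 2)] else [1]) else [p - 1, p ^ (a - 1)]

/-- Cyclic factors of `U(ZMod n)`, via the prime-power factorization of `n`. -/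
noncomputable def unitsList (n : ℕ) : List ℕ :=
  (Nat.factorization n).support.toList.flatMap fun p => pUnitsList p (Nat.factorization n p)

/-- One application of the units functor to a product of cyclic rings. -/
noncomputable def uStep (l : List ℕ) : List ℕ := l.flatMap unitsList

/-- Cyclic factors of the k-th iterated group of units `U^k(ZMod n)`. -/
noncomputable def UkList (k n : ℕ) : List ℕ := uStep^[k] [n]

/-- The k-th iterated group of units `U^k(ZMod n)`, as the product of its cyclic factors. -/
abbrev Uk (k n : ℕ) : Type := ∀ i : Fin (UkList k n).length, ZMod ((UkList k n).get i)


/-- Product of cyclic groups along a list. -/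
abbrev Gl (l : List ℕ) : Type := ∀ i : Fin l.length, ZMod (l.get i)

/-- Dependent `piFinSucc` as an additive equivalence. -/
def piFinSuccAddEquiv {n : ℕ} (β : Fin (n + 1) → Type*) [∀ i, AddZeroClass (β i)] :
    (∀ i, β i) ≃+ β 0 × ∀ i : Fin n, β i.succ where
  toFun f := (f 0, fun i => f i.succ)
  invFun x := Fin.cons x.1 x.2
  left_inv f := Fin.cons_self_tail f
  right_inv x := by simp
  map_add' f g := rfl

def glCons (a : ℕ) (l : List ℕ) : Gl (a :: l) ≃+ ZMod a × Gl l :=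
  piFinSuccAddEquiv (fun i => ZMod ((a :: l).get i))

instance : Unique (Gl []) := ⟨⟨fun i => i.elim0⟩, fun f => funext fun i => i.elim0⟩

def glNilProd (l : List ℕ) : Gl ([] ++ l) ≃+ Gl [] × Gl l :=
  (AddEquiv.uniqueProd (M := Gl l) (N := Gl [])).symm

noncomputable def glAppend (l₁ l₂ : List ℕ) : Gl (l₁ ++ l₂) ≃+ Gl l₁ × Gl l₂ := by
  induction l₁ with
  | nil => exact glNilProd l₂
  | cons a l ih =>
      exact (glCons a (l ++ l₂)).trans <| (AddEquiv.prodCongr (AddEquiv.refl _) ih).trans <|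
        (AddEquiv.prodAssoc (M := ZMod a) (N := Gl l) (P := Gl l₂)).symm.trans
          (AddEquiv.prodCongr (glCons a l).symm (AddEquiv.refl _))

lemma unitsList_one : unitsList 1 = [] := by simp [unitsList]

lemma unitsList_prime_pow {p : ℕ} (hp : p.Prime) (h2 : p ≠ 2) (a : ℕ) (ha : a ≠ 0) :
    unitsList (p ^ a) = [p - 1, p ^ (a - 1)] := by
  unfold unitsList
  rw [Nat.Prime.factorization_pow hp, Finsupp.support_single_ne_zero _ ha]
  simp [pUnitsList, h2]

lemma uStep_append (l₁ l₂ : List ℕ) : uStep (l₁ ++ l₂) = uStep l₁ ++ uStep l₂ :=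
  List.flatMap_append ..

lemma uStep_iterate_append (m : ℕ) (l₁ l₂ : List ℕ) :
    uStep^[m] (l₁ ++ l₂) = uStep^[m] l₁ ++ uStep^[m] l₂ := by
  induction m generalizing l₁ l₂ with
  | zero => rfl
  | succ m ih => rw [Function.iterate_succ_apply, Function.iterate_succ_apply,
      Function.iterate_succ_apply, uStep_append, ih]

lemma uStep_iterate_one (m : ℕ) (hm : m ≠ 0) : uStep^[m] [1] = [] := by
  obtain ⟨m, rfl⟩ := Nat.exists_eq_succ_of_ne_zero hm
  rw [Function.iterate_succ_apply, show uStep [1] = [] by simp [uStep, unitsList_one]]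
  clear hm
  induction m with
  | zero => rfl
  | succ m ih => rw [Function.iterate_succ_apply, show uStep [] = [] from rfl, ih]

def glCongr {l l' : List ℕ} (h : l = l') : Gl l ≃+ Gl l' := by subst h; exact AddEquiv.refl _

noncomputable def ukCongr {k k' n n' : ℕ} (hk : k = k') (hn : n = n') : Uk k n ≃+ Uk k' n' := by
  subst hk; subst hn; exact AddEquiv.refl _

instance : Unique (Gl [1]) := by
  have : ∀ i : Fin ([1] : List ℕ).length, Unique (ZMod (([1] : List ℕ).get i)) := fun i => by
    have : ([1] : List ℕ).get i = 1 := by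
      have : i.val = 0 := Nat.lt_one_iff.mp (by simpa using i.isLt)
      simp [List.get, Fin.ext_iff] at *
    rw [this]; exact inferInstanceAs (Unique (ZMod 1))
  exact Pi.unique

lemma ukList_step {p : ℕ} (hp : p.Prime) (h2 : p ≠ 2) (k α : ℕ) :
    UkList (k + 1) (p ^ (α + 1)) = uStep^[k] [p - 1] ++ UkList k (p ^ α) := by
  unfold UkList
  rw [Function.iterate_succ_apply,
    show uStep [p ^ (α + 1)] = [p - 1] ++ [p ^ α] by
      simp [uStep, unitsList_prime_pow hp h2 (α + 1) (Nat.succ_ne_zero α)],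
    uStep_iterate_append]

lemma ukList_p {p : ℕ} (hp : p.Prime) (h2 : p ≠ 2) (k : ℕ) :
    UkList (k + 1) p = uStep^[k] [p - 1] ++ uStep^[k] [1] := by
  unfold UkList
  rw [Function.iterate_succ_apply,
    show uStep [p] = [p - 1] ++ [1] by
      have := unitsList_prime_pow hp h2 1 one_ne_zero
      simp at this
      simp [uStep, this],
    uStep_iterate_append]

noncomputable def ukStepEquiv {p : ℕ} (hp : p.Prime) (h2 : p ≠ 2) (k α : ℕ) :
    Uk (k + 1) (p ^ (α + 1)) ≃+ Uk (k + 1) p × Uk k (p ^ α) := by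
  haveI : Unique (Gl (uStep^[k] [1])) := by
    match k with
    | 0 => exact inferInstanceAs (Unique (Gl [1]))
    | (k + 1) => rw [uStep_iterate_one _ (Nat.succ_ne_zero k)]; infer_instance
  have e1 : Uk (k + 1) (p ^ (α + 1)) ≃+ Gl (uStep^[k] [p - 1]) × Uk k (p ^ α) :=
    (glCongr (ukList_step hp h2 k α)).trans (glAppend _ _)
  have e2 : Uk (k + 1) p ≃+ Gl (uStep^[k] [p - 1]) :=
    (glCongr (ukList_p hp h2 k)).trans ((glAppend _ _).trans AddEquiv.prodUnique)
  exact e1.trans (AddEquiv.prodCongr e2.symm (AddEquiv.refl _))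

lemma main_ind {p : ℕ} (hp : p.Prime) (h2 : p ≠ 2) : ∀ t k α : ℕ, t ≤ k → t < α →
    Nonempty (Uk k (p ^ α) ≃+ (∀ j : Fin t, Uk (k - j) p) × Uk (k - t) (p ^ (α - t))) := by
  intro t
  induction t with
  | zero =>
      intro k α _ _
      exact ⟨(AddEquiv.uniqueProd (M := Uk k (p ^ α)) (N := ∀ j : Fin 0, Uk (k - j) p)).symm⟩
  | succ t ih =>
      intro k α htk htα
      obtain ⟨e2⟩ := ih (k - 1) (α - 1) (by omega) (by omega)
      have e1 : Uk k (p ^ α) ≃+ Uk k p × Uk (k - 1) (p ^ (α - 1)) :=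
        ((ukCongr (show k = (k - 1) + 1 by omega)
            (show p ^ α = p ^ ((α - 1) + 1) by rw [Nat.sub_add_cancel (by omega)])).trans
          (ukStepEquiv hp h2 (k - 1) (α - 1))).trans
          (AddEquiv.prodCongr (ukCongr (show k - 1 + 1 = k by omega) rfl) (AddEquiv.refl _))
      have e3 : (∀ j : Fin (t + 1), Uk (k - j) p) ≃+
          Uk k p × ∀ j : Fin t, Uk (k - 1 - j) p :=
        (piFinSuccAddEquiv (fun j : Fin (t + 1) => Uk (k - j) p)).trans
          (AddEquiv.prodCongr (ukCongr (by simp) rfl)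
            (AddEquiv.piCongrRight fun j =>
              ukCongr (show k - ((j.succ : Fin (t+1)) : ℕ) = k - 1 - j by
                simp [Fin.val_succ]; omega) rfl))
      refine ⟨e1.trans <| (AddEquiv.prodCongr (AddEquiv.refl _) e2).trans <|
        (AddEquiv.prodAssoc (M := Uk k p) (N := ∀ j : Fin t, Uk (k - 1 - j) p)
          (P := Uk (k - 1 - t) (p ^ (α - 1 - t)))).symm.trans <|
        AddEquiv.prodCongr e3.symm
          (ukCongr (by omega) (by rw [show α - 1 - t = α - (t+1) by omega]))⟩

theorem stmt_7 (p α k t : ℕ) (hp : p.Prime) (hodd : Odd p)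
    (ht1 : t < α) (ht2 : 1 ≤ t) (ht3 : t ≤ k) :
    Nonempty (Uk k (p ^ α) ≃+ (∀ j : Fin t, Uk (k - j) p) × Uk (k - t) (p ^ (α - t))) := by
  exact main_ind hp (by rintro rfl; exact (Nat.not_odd_iff_even.mpr even_two) hodd) t k α ht3 ht1
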